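/- Let D be a connected vertex transitive digraph on at least 2 vertices with directed diameter d and circumference ℓ. Then the cycle graph C(D) is a connected graph whose diameter is at least d/ℓ − 1. -/

import Mathlib

/-- A digraph is vertex transitive if for any two vertices `u, v` there is an
automorphism of the digraph mapping `u` to `v`. -/
def Digraph.IsVertexTransitive {V : Type*} (D : Digraph V) : Prop :=
  ∀ u v : V, ∃ e : V ≃ V, (∀ x y, D.Adj (e x) (e y) ↔ D.Adj x y) ∧ e u = v

/-- The underlying undirected (simple) graph of a digraph. -/
def Digraph.underlying {V : Type*} (D : Digraph V) : SimpleGraph V where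
  Adj x y := x ≠ y ∧ (D.Adj x y ∨ D.Adj y x)
  symm := ⟨fun x y h => ⟨h.1.symm, h.2.symm⟩⟩
  loopless := ⟨fun x h => h.1 rfl⟩

/-- `D.HasDirCycleOfLen n` means that `D` contains a directed cycle of length `n`. -/
def Digraph.HasDirCycleOfLen {V : Type*} (D : Digraph V) (n : ℕ) : Prop :=
  1 ≤ n ∧ ∃ f : ZMod n → V, Function.Injective f ∧ ∀ i, D.Adj (f i) (f (i + 1))

/-- The circumference of a digraph : the length of a longest directed cycle. -/
noncomputable def Digraph.circumference {V : Type*} (D : Digraph V) : ℕ :=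
  sSup {n : ℕ | D.HasDirCycleOfLen n}

/-- `D.HasDirWalkOfLen u v n` : there is a directed walk of length `n` from `u` to `v`. -/
def Digraph.HasDirWalkOfLen {V : Type*} (D : Digraph V) (u v : V) (n : ℕ) : Prop :=
  ∃ f : Fin (n + 1) → V, f 0 = u ∧ f (Fin.last n) = v ∧
    ∀ i : Fin n, D.Adj (f i.castSucc) (f i.succ)

/-- The directed distance from `u` to `v`. -/
noncomputable def Digraph.dirDist {V : Type*} (D : Digraph V) (u v : V) : ℕ∞ :=
  sInf ((fun n : ℕ => (n : ℕ∞)) '' {n : ℕ | D.HasDirWalkOfLen u v n})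

/-- The directed diameter of a digraph. -/
noncomputable def Digraph.dirDiam {V : Type*} (D : Digraph V) : ℕ∞ :=
  ⨆ u : V, ⨆ v : V, D.dirDist u v

/-- `A` is the arc set of some directed cycle of `D`. We identify a directed cycle of `D`
with its set of arcs (which determines it up to rotation of the cyclic sequence). -/
def Digraph.IsDirCycleSet {V : Type*} (D : Digraph V) (A : Set (V × V)) : Prop :=
  ∃ n : ℕ, 1 ≤ n ∧ ∃ f : ZMod n → V, Function.Injective f ∧
    (∀ i, D.Adj (f i) (f (i + 1))) ∧ A = Set.range fun i => (f i, f (i + 1))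

/-- The set of vertices of a directed cycle, given by its arc set. -/
def cycleVerts {V : Type*} (A : Set (V × V)) : Set V := Prod.fst '' A

/-- The cycle graph `C(D)` of a digraph `D` : its vertices are the directed cycles of
`D`, two of them being adjacent iff they are distinct and share at least one vertex. -/
def Digraph.cycleGraph {V : Type*} (D : Digraph V) :
    SimpleGraph {A : Set (V × V) // D.IsDirCycleSet A} where
  Adj C₁ C₂ := C₁ ≠ C₂ ∧ (cycleVerts C₁.1 ∩ cycleVerts C₂.1).Nonempty
  symm := ⟨fun C₁ C₂ h => ⟨h.1.symm, by rw [Set.inter_comm]; exact h.2⟩⟩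
  loopless := ⟨fun C h => h.1 rfl⟩

namespace CycAux

variable {V : Type*} {D : Digraph V}

/-- ℕ-indexed directed walk of length `n` from `u` to `v`. -/
def NW (D : Digraph V) (u v : V) (n : ℕ) : Prop :=
  ∃ f : ℕ → V, f 0 = u ∧ f n = v ∧ ∀ i < n, D.Adj (f i) (f (i + 1))

lemma hasDirWalk_iff_nw {u v : V} {n : ℕ} :
    D.HasDirWalkOfLen u v n ↔ NW D u v n := by
  constructor
  · rintro ⟨f, h0, hl, ha⟩
    refine ⟨fun i => f ⟨min i n, Nat.lt_succ_of_le (min_le_right _ _)⟩, ?_, ?_, ?_⟩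
    · have e : (⟨min 0 n, Nat.lt_succ_of_le (min_le_right _ _)⟩ : Fin (n+1)) = 0 := by
        ext; simp
      show f ⟨min 0 n, Nat.lt_succ_of_le (min_le_right _ _)⟩ = u
      rw [e, h0]
    · have e : (⟨min n n, Nat.lt_succ_of_le (min_le_right _ _)⟩ : Fin (n+1)) = Fin.last n := by
        ext; simp
      show f ⟨min n n, Nat.lt_succ_of_le (min_le_right _ _)⟩ = v
      rw [e, hl]
    · intro i hi
      have e1 : (⟨min i n, Nat.lt_succ_of_le (min_le_right _ _)⟩ : Fin (n+1))
          = (⟨i, hi⟩ : Fin n).castSucc := by ext; simp; omega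
      have e2 : (⟨min (i+1) n, Nat.lt_succ_of_le (min_le_right _ _)⟩ : Fin (n+1))
          = (⟨i, hi⟩ : Fin n).succ := by ext; simp; omega
      show D.Adj (f ⟨min i n, Nat.lt_succ_of_le (min_le_right _ _)⟩)
        (f ⟨min (i+1) n, Nat.lt_succ_of_le (min_le_right _ _)⟩)
      rw [e1, e2]; exact ha ⟨i, hi⟩
  · rintro ⟨f, h0, hl, ha⟩
    refine ⟨fun i => f i.val, by simpa using h0, by simpa using hl, ?_⟩
    intro i
    simpa using ha i.val i.isLt

lemma NW.concat {u w v : V} {m n : ℕ} (h1 : NW D u w m) (h2 : NW D w v n) :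
    NW D u v (m + n) := by
  obtain ⟨f, hf0, hfm, hfa⟩ := h1
  obtain ⟨g, hg0, hgn, hga⟩ := h2
  refine ⟨fun i => if i ≤ m then f i else g (i - m), by simpa using hf0, ?_, ?_⟩
  · rcases Nat.eq_zero_or_pos n with h | h
    · subst h
      simp only [Nat.add_zero, if_pos le_rfl, hfm]
      rw [← hg0, hgn]
    · have hne : ¬ (m + n ≤ m) := by omega
      simp only [if_neg hne, Nat.add_sub_cancel_left, hgn]
  · intro i hi
    rcases lt_trichotomy i m with hlt | heq | hgt
    · have e1 : i ≤ m := hlt.le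
      have e2 : i + 1 ≤ m := hlt
      simp only [if_pos e1, if_pos e2]
      exact hfa i hlt
    · subst heq
      have hn : 0 < n := by omega
      have e2 : ¬ (i + 1 ≤ i) := by omega
      have e3 : i + 1 - i = 1 := by omega
      simp only [if_pos le_rfl, if_neg e2, e3, hfm, ← hg0]
      exact hga 0 hn
    · have e1 : ¬ (i ≤ m) := by omega
      have e2 : ¬ (i + 1 ≤ m) := by omega
      have e3 : i + 1 - m = (i - m) + 1 := by omega
      simp only [if_neg e1, if_neg e2, e3]
      exact hga (i - m) (by omega)

lemma nw_dirDist_le {u v : V} {n : ℕ} (h : NW D u v n) : D.dirDist u v ≤ (n : ℕ∞) :=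
  sInf_le (Set.mem_image_of_mem _ (hasDirWalk_iff_nw.mpr h))

lemma strong_conn {d : ℕ} (hd : D.dirDiam = (d : ℕ∞)) (a b : V) : ∃ n, NW D a b n := by
  by_contra h
  push_neg at h
  have hempty : {n : ℕ | D.HasDirWalkOfLen a b n} = ∅ := by
    ext n
    simp only [Set.mem_setOf_eq, Set.mem_empty_iff_false, iff_false]
    exact fun hw => h n (hasDirWalk_iff_nw.mp hw)
  have htop : D.dirDist a b = ⊤ := by
    unfold Digraph.dirDist
    rw [hempty]
    simp
  have hle : D.dirDist a b ≤ D.dirDiam := le_iSup_of_le a (le_iSup_of_le b le_rfl)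
  rw [hd, htop] at hle
  simp at hle

lemma exists_min_inj_walk {u v : V} (h : ∃ n, NW D u v n) :
    ∃ (m : ℕ) (f : ℕ → V), f 0 = u ∧ f m = v ∧ (∀ i < m, D.Adj (f i) (f (i+1))) ∧
      (∀ i, i ≤ m → ∀ j, j ≤ m → f i = f j → i = j) := by
  classical
  set S := {n | NW D u v n} with hS
  have hSne : S.Nonempty := h
  set m := sInf S with hm
  have hmem : NW D u v m := Nat.sInf_mem hSne
  obtain ⟨f, hf0, hfm, hfa⟩ := hmem
  refine ⟨m, f, hf0, hfm, hfa, ?_⟩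
  have key : ∀ i j, i < j → j ≤ m → f i ≠ f j := by
    intro i j hij hjm heq
    set t := j - i with ht
    set L := m - t with hL
    have ht1 : 1 ≤ t := by omega
    have hLm : L < m := by omega
    have hnw : NW D u v L := by
      refine ⟨fun k => if k ≤ i then f k else f (k + t), by simp [hf0], ?_, ?_⟩
      · by_cases hLi : L ≤ i
        · have hLi' : L = i := by omega
          have hmj : m = j := by omega
          simp only [if_pos hLi]
          rw [hLi', heq, ← hmj, hfm]
        · simp only [if_neg hLi]
          have : L + t = m := by omega
          rw [this, hfm]
      · intro k hk
        by_cases h1 : k + 1 ≤ i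
        · simp only [if_pos (by omega : k ≤ i), if_pos h1]
          exact hfa k (by omega)
        · by_cases h2 : k ≤ i
          · have hki : k = i := by omega
            have e3 : k + 1 + t = j + 1 := by omega
            simp only [if_pos h2, if_neg h1]
            rw [e3, hki, heq]
            exact hfa j (by omega)
          · have e3 : k + 1 + t = (k + t) + 1 := by omega
            simp only [if_neg h2, if_neg h1, e3]
            exact hfa (k + t) (by omega)
    have := Nat.sInf_le (show L ∈ S from hnw)
    omega
  intro i hi j hj heq
  by_contra hne
  rcases Nat.lt_or_ge i j with hlt | hge
  · exact key i j hlt hj heq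
  · exact key j i (by omega) hi heq.symm

lemma cycleVerts_range {n : ℕ} (f : ZMod n → V) :
    cycleVerts (Set.range fun i => (f i, f (i + 1))) = Set.range f := by
  unfold cycleVerts
  rw [← Set.range_comp]
  rfl

lemma exists_cycle_thru_arc (hirr : ∀ v : V, ¬ D.Adj v v)
    (hsc : ∀ a b : V, ∃ n, NW D a b n) {x y : V} (hxy : D.Adj x y) :
    ∃ A, D.IsDirCycleSet A ∧ x ∈ cycleVerts A ∧ y ∈ cycleVerts A := by
  obtain ⟨m, f, hf0, hfm, hfa, hinj⟩ := exists_min_inj_walk (hsc y x)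
  have hxy' : x ≠ y := fun h => hirr x (h ▸ hxy)
  have hm1 : 1 ≤ m := by
    rcases Nat.eq_zero_or_pos m with h | h
    · exfalso; apply hxy'; subst h; rw [← hfm, hf0]
    · exact h
  haveI : NeZero (m + 1) := ⟨Nat.succ_ne_zero m⟩
  haveI : Fact (1 < m + 1) := ⟨by omega⟩
  set g : ZMod (m+1) → V := fun i => if i = 0 then x else f (i.val - 1) with hg
  have hval1 : (1 : ZMod (m+1)).val = 1 := ZMod.val_one _
  have hone_ne : (1 : ZMod (m+1)) ≠ 0 := by
    intro h
    have := (ZMod.val_eq_zero (1 : ZMod (m+1))).mpr h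
    omega
  have hvpos : ∀ i : ZMod (m+1), i ≠ 0 → 1 ≤ i.val ∧ i.val ≤ m := by
    intro i hi
    have h1 : i.val ≠ 0 := fun h => hi ((ZMod.val_eq_zero i).mp h)
    have h2 : i.val < m + 1 := ZMod.val_lt i
    omega
  have hg0 : g 0 = x := by simp [hg]
  have hg1 : g 1 = y := by
    simp only [hg, if_neg hone_ne, hval1]
    simpa using hf0
  have hginj : Function.Injective g := by
    intro i j hij
    by_cases hi : i = 0 <;> by_cases hj : j = 0
    · rw [hi, hj]
    · exfalso
      obtain ⟨hj1, hj2⟩ := hvpos j hj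
      simp only [hg, if_pos hi, if_neg hj] at hij
      have := hinj m le_rfl (j.val - 1) (by omega) (by rw [hfm, hij])
      omega
    · exfalso
      obtain ⟨hi1, hi2⟩ := hvpos i hi
      simp only [hg, if_neg hi, if_pos hj] at hij
      have := hinj m le_rfl (i.val - 1) (by omega) (by rw [hfm, ← hij])
      omega
    · obtain ⟨hi1, hi2⟩ := hvpos i hi
      obtain ⟨hj1, hj2⟩ := hvpos j hj
      simp only [hg, if_neg hi, if_neg hj] at hij
      have := hinj (i.val - 1) (by omega) (j.val - 1) (by omega) hij
      have hv : i.val = j.val := by omega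
      exact ZMod.val_injective _ hv
  have hgadj : ∀ i, D.Adj (g i) (g (i + 1)) := by
    intro i
    by_cases hi : i = 0
    · rw [hi]
      rw [show ((0 : ZMod (m+1)) + 1) = 1 by ring, hg0, hg1]
      exact hxy
    · obtain ⟨hi1, hi2⟩ := hvpos i hi
      by_cases him : i.val = m
      · have hi10 : i + 1 = 0 := by
          have : (i + 1).val = 0 := by
            rw [ZMod.val_add, hval1, him]
            simp
          exact (ZMod.val_eq_zero _).mp this
        rw [hi10, hg0]
        simp only [hg, if_neg hi, him]
        have e : m - 1 + 1 = m := by omega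
        rw [← hfm, ← e]
        exact hfa (m - 1) (by omega)
      · have hvadd : (i + 1).val = i.val + 1 := by
          rw [ZMod.val_add, hval1]
          exact Nat.mod_eq_of_lt (by omega)
        have hi1ne : i + 1 ≠ 0 := by
          intro h
          have := (ZMod.val_eq_zero (i+1)).mpr h
          omega
        simp only [hg, if_neg hi, if_neg hi1ne, hvadd]
        have e : i.val - 1 + 1 = i.val := by omega
        have e2 : i.val + 1 - 1 = i.val := by omega
        rw [e2, ← e]
        exact hfa (i.val - 1) (by omega)
  refine ⟨Set.range fun i => (g i, g (i + 1)), ⟨m + 1, by omega, g, hginj, hgadj, rfl⟩, ?_, ?_⟩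
  · rw [cycleVerts_range]
    exact ⟨0, hg0⟩
  · rw [cycleVerts_range]
    exact ⟨1, hg1⟩


lemma cyclen_le [Fintype V] {ℓ : ℕ} (hℓ : D.circumference = ℓ) {n : ℕ}
    (hn : D.HasDirCycleOfLen n) : n ≤ ℓ := by
  have hbdd : BddAbove {k | D.HasDirCycleOfLen k} := by
    refine ⟨Fintype.card V, fun k hk => ?_⟩
    obtain ⟨hk1, f, hinj, -⟩ := hk
    haveI : NeZero k := ⟨by omega⟩
    calc k = Fintype.card (ZMod k) := (ZMod.card k).symm
    _ ≤ Fintype.card V := Fintype.card_le_of_injective f hinj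
  have := le_csSup hbdd hn
  unfold Digraph.circumference at hℓ
  omega

lemma cycle_walk [Fintype V] {ℓ : ℕ} (hℓ : D.circumference = ℓ) {A : Set (V × V)}
    (hA : D.IsDirCycleSet A) {u v : V} (hu : u ∈ cycleVerts A) (hv : v ∈ cycleVerts A) :
    ∃ t ≤ ℓ - 1, NW D u v t := by
  obtain ⟨n, hn1, f, hinj, hadj, rfl⟩ := hA
  haveI : NeZero n := ⟨by omega⟩
  rw [cycleVerts_range] at hu hv
  obtain ⟨i, hi⟩ := hu
  obtain ⟨j, hj⟩ := hv
  have hnle : n ≤ ℓ := cyclen_le hℓ ⟨hn1, f, hinj, hadj⟩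
  set t := (j - i).val with htdef
  have htlt : t < n := ZMod.val_lt (j - i)
  refine ⟨t, by omega, fun k => f (i + (k : ZMod n)), by simpa using hi, ?_, ?_⟩
  · show f (i + ((t : ℕ) : ZMod n)) = v
    rw [htdef, ZMod.natCast_rightInverse (j - i)]
    rw [show i + (j - i) = j by ring]
    exact hj
  · intro k hk
    show D.Adj (f (i + ((k : ℕ) : ZMod n))) (f (i + (((k+1) : ℕ) : ZMod n)))
    have e : (((k+1) : ℕ) : ZMod n) = ((k : ℕ) : ZMod n) + 1 := by push_cast; ring
    rw [e, ← add_assoc]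
    exact hadj (i + ((k : ℕ) : ZMod n))

lemma cycleVerts_nonempty {A : Set (V × V)} (hA : D.IsDirCycleSet A) :
    (cycleVerts A).Nonempty := by
  obtain ⟨n, hn1, f, -, -, rfl⟩ := hA
  haveI : NeZero n := ⟨by omega⟩
  rw [cycleVerts_range]
  exact ⟨f 0, 0, rfl⟩

lemma exists_out [Fintype V] (hcard : 2 ≤ Fintype.card V)
    (hsc : ∀ a b : V, ∃ n, NW D a b n) (v : V) : ∃ w, D.Adj v w := by
  obtain ⟨u, hu⟩ := Fintype.exists_ne_of_one_lt_card (by omega) v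
  obtain ⟨n, f, hf0, hfn, hfa⟩ := hsc v u
  have hn : n ≠ 0 := by
    rintro rfl
    exact hu (by rw [← hfn, hf0])
  exact ⟨f 1, hf0 ▸ hfa 0 (by omega)⟩

lemma shares_reachable {C₁ C₂ : {A : Set (V × V) // D.IsDirCycleSet A}}
    (h : (cycleVerts C₁.1 ∩ cycleVerts C₂.1).Nonempty) :
    D.cycleGraph.Reachable C₁ C₂ := by
  by_cases he : C₁ = C₂
  · exact he ▸ SimpleGraph.Reachable.refl _
  · exact SimpleGraph.Adj.reachable ⟨he, h⟩

lemma reach_aux (hirr : ∀ v : V, ¬ D.Adj v v) (hsc : ∀ a b : V, ∃ n, NW D a b n) :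
    ∀ (n : ℕ) (u v : V), NW D u v n →
      ∀ (C₁ C₂ : {A : Set (V × V) // D.IsDirCycleSet A}),
        u ∈ cycleVerts C₁.1 → v ∈ cycleVerts C₂.1 → D.cycleGraph.Reachable C₁ C₂ := by
  intro n
  induction n with
  | zero =>
    intro u v hw C₁ C₂ hu hv
    obtain ⟨f, h0, hn, -⟩ := hw
    have huv : u = v := by rw [← h0, hn]
    exact shares_reachable ⟨u, hu, huv ▸ hv⟩
  | succ n ih =>
    intro u v hw C₁ C₂ hu hv
    obtain ⟨f, h0, hn, ha⟩ := hw
    have harc : D.Adj u (f 1) := h0 ▸ ha 0 (by omega)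
    obtain ⟨B, hB, huB, hwB⟩ := exists_cycle_thru_arc hirr hsc harc
    have h1 : NW D (f 1) v n := ⟨fun k => f (k + 1), rfl, hn, fun i hi => ha (i + 1) (by omega)⟩
    exact (shares_reachable ⟨u, hu, huB⟩).trans (ih (f 1) v h1 ⟨B, hB⟩ C₂ hwB hv)

lemma walk_to_nw [Fintype V] {ℓ : ℕ} (hℓ : D.circumference = ℓ)
    {A B : {A : Set (V × V) // D.IsDirCycleSet A}} (p : D.cycleGraph.Walk A B) :
    ∀ a b : V, a ∈ cycleVerts A.1 → b ∈ cycleVerts B.1 →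
      ∃ t ≤ (p.length + 1) * (ℓ - 1), NW D a b t := by
  induction p with
  | @nil A =>
    intro a b ha hb
    obtain ⟨t, ht, hw⟩ := cycle_walk hℓ A.2 ha hb
    exact ⟨t, by simpa using ht, hw⟩
  | @cons A A' B h p ih =>
    intro a b ha hb
    obtain ⟨s, hs1, hs2⟩ := h.2
    obtain ⟨t₁, ht₁, hw₁⟩ := cycle_walk hℓ A.2 ha hs1
    obtain ⟨t₂, ht₂, hw₂⟩ := ih s b hs2 hb
    refine ⟨t₁ + t₂, ?_, hw₁.concat hw₂⟩
    rw [SimpleGraph.Walk.length_cons]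
    have e : (p.length + 1 + 1) * (ℓ - 1) = (p.length + 1) * (ℓ - 1) + (ℓ - 1) := by ring
    omega

end CycAux

/-- For a connected vertex transitive digraph `D` on at least two vertices with directed
diameter `d` and circumference `ℓ`, the cycle graph `C(D)` is connected and has diameter
at least `d/ℓ - 1`. -/
theorem cycleGraph_connected_and_large_diam {V : Type*} [Fintype V] (D : Digraph V)
    (hirr : ∀ v : V, ¬ D.Adj v v)
    (hconn : D.underlying.Connected)
    (htrans : D.IsVertexTransitive)
    (hcard : 2 ≤ Fintype.card V)
    (d ℓ : ℕ) (hd : D.dirDiam = (d : ℕ∞)) (hℓ : D.circumference = ℓ) :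
    D.cycleGraph.Connected ∧
      (d : ℝ) / (ℓ : ℝ) - 1 ≤ (D.cycleGraph.diam : ℝ) := by
  classical
  have hsc : ∀ a b : V, ∃ n, CycAux.NW D a b n := fun a b => CycAux.strong_conn hd a b
  haveI : Nonempty V := Fintype.card_pos_iff.mp (by omega)
  obtain ⟨v0⟩ := ‹Nonempty V›
  obtain ⟨w0, hv0⟩ := CycAux.exists_out hcard hsc v0
  obtain ⟨A0, hA0, -, -⟩ := CycAux.exists_cycle_thru_arc hirr hsc hv0
  have hl1 : 1 ≤ ℓ := by
    obtain ⟨n, hn1, f, hinj, hadj, -⟩ := hA0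
    have := CycAux.cyclen_le hℓ ⟨hn1, f, hinj, hadj⟩
    omega
  have hvc : ∀ v : V, ∃ C : {A : Set (V × V) // D.IsDirCycleSet A}, v ∈ cycleVerts C.1 := by
    intro v
    obtain ⟨w, hw⟩ := CycAux.exists_out hcard hsc v
    obtain ⟨A, hA, hvA, -⟩ := CycAux.exists_cycle_thru_arc hirr hsc hw
    exact ⟨⟨A, hA⟩, hvA⟩
  haveI hCne : Nonempty {A : Set (V × V) // D.IsDirCycleSet A} := ⟨⟨A0, hA0⟩⟩
  have hCconn : D.cycleGraph.Connected := by
    rw [SimpleGraph.connected_iff]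
    refine ⟨fun C₁ C₂ => ?_, hCne⟩
    obtain ⟨u, hu⟩ := CycAux.cycleVerts_nonempty C₁.2
    obtain ⟨v, hv⟩ := CycAux.cycleVerts_nonempty C₂.2
    obtain ⟨n, hw⟩ := hsc u v
    exact CycAux.reach_aux hirr hsc n u v hw C₁ C₂ hu hv
  refine ⟨hCconn, ?_⟩
  have hediam : D.cycleGraph.ediam ≠ ⊤ := by
    obtain ⟨u, v, huv⟩ := SimpleGraph.exists_edist_eq_ediam_of_finite (G := D.cycleGraph)
    rw [← huv]
    exact SimpleGraph.edist_ne_top_iff_reachable.mpr (hCconn.preconnected u v)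
  have hkey : ∀ u v : V, D.dirDist u v ≤ (((D.cycleGraph.diam + 1) * ℓ : ℕ) : ℕ∞) := by
    intro u v
    obtain ⟨Cu, hCu⟩ := hvc u
    obtain ⟨Cv, hCv⟩ := hvc v
    obtain ⟨p, hp⟩ := (hCconn.preconnected Cu Cv).exists_walk_length_eq_dist
    obtain ⟨t, ht, hw⟩ := CycAux.walk_to_nw hℓ p u v hCu hCv
    have hdist : D.cycleGraph.dist Cu Cv ≤ D.cycleGraph.diam :=
      SimpleGraph.dist_le_diam hediam
    have ht' : t ≤ (D.cycleGraph.diam + 1) * ℓ := by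
      have h1 : p.length ≤ D.cycleGraph.diam := by rw [hp]; exact hdist
      have h2 : (p.length + 1) * (ℓ - 1) ≤ (D.cycleGraph.diam + 1) * ℓ :=
        Nat.mul_le_mul (by omega) (by omega)
      omega
    exact (CycAux.nw_dirDist_le hw).trans (Nat.cast_le.mpr ht')
  have hdle : d ≤ (D.cycleGraph.diam + 1) * ℓ := by
    have hsup : D.dirDiam ≤ (((D.cycleGraph.diam + 1) * ℓ : ℕ) : ℕ∞) :=
      iSup_le fun u => iSup_le fun v => hkey u v
    rw [hd] at hsup
    exact_mod_cast hsup
  have hl0 : (0 : ℝ) < (ℓ : ℝ) := by exact_mod_cast hl1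
  rw [sub_le_iff_le_add, div_le_iff₀ hl0]
  calc (d : ℝ) ≤ (((D.cycleGraph.diam + 1) * ℓ : ℕ) : ℝ) := by exact_mod_cast hdle
  _ = ((D.cycleGraph.diam : ℝ) + 1) * (ℓ : ℝ) := by push_cast; ring
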